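/- Let f be a function on (a, b] that is Riemann integrable on [c, b] for every c ∈ (a, b), such that the improper integral ∫_{a+}^b f exists, and suppose there is a monotone decreasing function M on (a, b] with |f(x)| ≤ M(x) on (a, b] and ∫_{a+}^b M < ∞. Then (1/n) Σ_k f(k/n) → ∫_{a+}^b f as n → ∞, where the sum runs over all integers k satisfying a·n + 1 < k < b·n. -/

import Mathlib

open MeasureTheory Filter Set intervalIntegral
open scoped Real Topology

/-- `f` is Riemann integrable on `[a,b]`: bounded there and (by Lebesgue's criterion)
continuous at almost every point of `[a,b]`. -/
def RiemannIntegrableOn (f : ℝ → ℂ) (a b : ℝ) : Prop :=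
  (∃ M : ℝ, ∀ x ∈ Set.Icc a b, ‖f x‖ ≤ M) ∧
    ∀ᵐ x ∂(volume.restrict (Set.Icc a b)), ContinuousWithinAt f (Set.Icc a b) x

noncomputable def stepSum (f : ℝ → ℂ) (c b : ℝ) (n : ℕ) (x : ℝ) : ℂ :=
  ∑ k ∈ Finset.Ioo ⌊c * n⌋ ⌈b * n⌉,
    Set.indicator (Set.Ioc (((k : ℝ) - 1)/n) ((k : ℝ)/n)) (fun _ => f ((k : ℝ)/n)) x

lemma stepSum_eq (f : ℝ → ℂ) (c b : ℝ) (n : ℕ) (hn : 1 ≤ n) (x : ℝ) :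
    stepSum f c b n x =
      if x ∈ Set.Ioc ((⌊c * n⌋ : ℝ)/n) (((⌈b * n⌉ : ℝ) - 1)/n)
      then f ((⌈(n : ℝ) * x⌉ : ℝ)/n) else 0 := by
  have hn0 : (0:ℝ) < n := by exact_mod_cast hn
  by_cases hx : x ∈ Set.Ioc ((⌊c * n⌋ : ℝ)/n) (((⌈b * n⌉ : ℝ) - 1)/n)
  · rw [if_pos hx]
    obtain ⟨hx1, hx2⟩ := hx
    set k0 : ℤ := ⌈(n : ℝ) * x⌉ with hk0
    have hnx1 : (⌊c * n⌋ : ℝ) < (n:ℝ) * x := by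
      rw [div_lt_iff₀ hn0] at hx1; linarith [hx1]
    have h1 : ⌊c * n⌋ < k0 := Int.lt_ceil.mpr hnx1
    have h2 : k0 ≤ ⌈b * n⌉ - 1 := by
      rw [hk0]
      apply Int.ceil_le.mpr
      rw [le_div_iff₀ hn0] at hx2
      push_cast
      linarith
    have h2' : k0 < ⌈b * n⌉ := by omega
    have hmem : k0 ∈ Finset.Ioo ⌊c * n⌋ ⌈b * n⌉ := Finset.mem_Ioo.mpr ⟨h1, h2'⟩
    rw [stepSum, Finset.sum_eq_single_of_mem k0 hmem]
    · apply Set.indicator_of_mem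
      have hle := Int.le_ceil ((n:ℝ) * x)
      have hlt := Int.ceil_lt_add_one ((n:ℝ) * x)
      rw [← hk0] at hle hlt
      constructor
      · rw [div_lt_iff₀ hn0]; linarith
      · rw [le_div_iff₀ hn0]; linarith
    · intro k hk hne
      apply Set.indicator_of_notMem
      intro hmm
      apply hne
      obtain ⟨hm1, hm2⟩ := hmm
      rw [div_lt_iff₀ hn0] at hm1
      rw [le_div_iff₀ hn0] at hm2
      have hA : k0 ≤ k := by
        rw [hk0]; exact Int.ceil_le.mpr (by rw [mul_comm]; exact hm2)
      have hB : k - 1 < k0 := by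
        rw [hk0]
        apply Int.lt_ceil.mpr
        push_cast
        linarith
      omega
  · rw [if_neg hx]
    apply Finset.sum_eq_zero
    intro k hk
    apply Set.indicator_of_notMem
    intro hmm
    apply hx
    rw [Finset.mem_Ioo] at hk
    obtain ⟨hm1, hm2⟩ := hmm
    have c1 : (⌊c * n⌋ : ℝ) ≤ (k:ℝ) - 1 := by
      have : (⌊c * n⌋ : ℤ) ≤ k - 1 := by omega
      exact_mod_cast this
    have c2 : (k : ℝ) ≤ (⌈b * n⌉ : ℝ) - 1 := by
      have : k ≤ (⌈b * n⌉ : ℤ) - 1 := by omega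
      exact_mod_cast this
    constructor
    · exact lt_of_le_of_lt ((div_le_div_iff_of_pos_right hn0).mpr c1) hm1
    · exact le_trans hm2 ((div_le_div_iff_of_pos_right hn0).mpr c2)

lemma stepSum_integral (f : ℝ → ℂ) (c b : ℝ) (n : ℕ) (hn : 1 ≤ n) :
    ∫ x, stepSum f c b n x =
      ∑ k ∈ Finset.Ioo ⌊c * n⌋ ⌈b * n⌉, f ((k : ℝ)/n) * (1/(n : ℂ)) := by
  have hn0 : (0:ℝ) < n := by exact_mod_cast hn
  simp only [stepSum]
  rw [MeasureTheory.integral_finset_sum]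
  · refine Finset.sum_congr rfl fun k hk => ?_
    rw [MeasureTheory.integral_indicator_const _ measurableSet_Ioc, measureReal_def, Real.volume_Ioc]
    have hlen : (k:ℝ)/n - ((k:ℝ)-1)/n = 1/n := by
      rw [div_sub_div_same]; norm_num
    rw [hlen, ENNReal.toReal_ofReal (by positivity)]
    rw [Complex.real_smul]
    push_cast
    ring
  · intro k _
    rw [integrable_indicator_iff measurableSet_Ioc]
    exact integrableOn_const measure_Ioc_lt_top.ne

lemma lemB (c b : ℝ) (hcb : c < b) (f : ℝ → ℂ)
    (hbd : ∃ M0 : ℝ, ∀ x ∈ Set.Icc c b, ‖f x‖ ≤ M0)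
    (hcont : ∀ᵐ x ∂(volume.restrict (Set.Icc c b)), ContinuousWithinAt f (Set.Icc c b) x) :
    Tendsto (fun n : ℕ => ∑ k ∈ Finset.Ioo ⌊c * n⌋ ⌈b * n⌉, f ((k : ℝ)/n) * (1/(n : ℂ)))
      atTop (nhds (∫ x in c..b, f x)) := by
  obtain ⟨M0, hM0⟩ := hbd
  have key : Tendsto (fun n : ℕ => ∫ x, stepSum f c b n x) atTop
      (nhds (∫ x, Set.indicator (Set.Ioc c b) f x)) := by
    apply MeasureTheory.tendsto_integral_of_dominated_convergence
      (Set.indicator (Set.Icc (c-1) b) (fun _ => max M0 0))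
    · -- measurability
      intro n
      apply StronglyMeasurable.aestronglyMeasurable
      apply Finset.stronglyMeasurable_fun_sum
      intro k _
      exact stronglyMeasurable_const.indicator measurableSet_Ioc
    · -- bound integrable
      rw [integrable_indicator_iff measurableSet_Icc]
      exact integrableOn_const measure_Icc_lt_top.ne
    · -- bound holds
      intro n
      apply Eventually.of_forall
      intro x
      have hnn : (0:ℝ) ≤ Set.indicator (Set.Icc (c-1) b) (fun _ => max M0 0) x :=
        Set.indicator_nonneg (fun _ _ => le_max_right M0 0) x
      by_cases hn : 1 ≤ n
      · have hn0 : (0:ℝ) < n := by exact_mod_cast hn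
        have hn1 : (1:ℝ)/n ≤ 1 := by
          rw [div_le_one hn0]; exact_mod_cast hn
        rw [stepSum_eq f c b n hn x]
        split_ifs with hx
        · obtain ⟨hx1, hx2⟩ := hx
          have hfl := Int.sub_one_lt_floor (c * n)
          have hcl := Int.ceil_lt_add_one (b * n)
          have h1 : ⌊c * n⌋ < ⌈(n:ℝ) * x⌉ := by
            apply Int.lt_ceil.mpr
            rw [div_lt_iff₀ hn0] at hx1
            linarith
          have h1' : c * n < (⌈(n:ℝ) * x⌉ : ℝ) := by
            have : (⌊c * n⌋ : ℝ) + 1 ≤ (⌈(n:ℝ) * x⌉ : ℝ) := by exact_mod_cast h1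
            linarith
          have h2 : ((⌈(n:ℝ) * x⌉ : ℝ)) ≤ (⌈b * n⌉ : ℝ) - 1 := by
            have : ⌈(n:ℝ) * x⌉ ≤ ⌈b * n⌉ - 1 := by
              apply Int.ceil_le.mpr
              rw [le_div_iff₀ hn0] at hx2
              push_cast
              linarith
            exact_mod_cast this
          have hmem : (⌈(n:ℝ) * x⌉ : ℝ)/n ∈ Set.Icc c b := by
            constructor
            · rw [le_div_iff₀ hn0]; linarith
            · rw [div_le_iff₀ hn0]; nlinarith
          have hge1 : (1:ℝ) ≤ (n:ℝ) := by exact_mod_cast hn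
          have hxmem : x ∈ Set.Icc (c-1) b := by
            rw [div_lt_iff₀ hn0] at hx1
            rw [le_div_iff₀ hn0] at hx2
            constructor
            · nlinarith [hx1, hfl, hge1]
            · nlinarith [hx2, hcl, hge1]
          rw [Set.indicator_of_mem hxmem]
          exact le_trans (hM0 _ hmem) (le_max_left M0 0)
        · simpa using hnn
      · have hn' : n = 0 := by omega
        subst hn'
        simp only [stepSum, Nat.cast_zero, mul_zero, Int.floor_zero, Int.ceil_zero,
          Finset.Ioo_self, Finset.sum_empty, norm_zero]
        exact hnn
    · -- pointwise convergence a.e.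
      have hae : ∀ᵐ x : ℝ, x ∈ Set.Icc c b → ContinuousWithinAt f (Set.Icc c b) x :=
        (ae_restrict_iff' measurableSet_Icc).mp hcont
      have hcsing : ∀ᵐ x : ℝ, x ≠ c := by
        rw [ae_iff]
        simp only [not_not, Set.setOf_eq_eq_singleton]
        exact Real.volume_singleton
      have hbsing : ∀ᵐ x : ℝ, x ≠ b := by
        rw [ae_iff]
        simp only [not_not, Set.setOf_eq_eq_singleton]
        exact Real.volume_singleton
      filter_upwards [hae, hcsing, hbsing] with x hx hxc hxb
      rcases lt_trichotomy x c with h | h | h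
      · -- x < c
        have hFx : Set.indicator (Set.Ioc c b) f x = 0 :=
          Set.indicator_of_notMem (fun hm => absurd hm.1 (not_lt.mpr h.le)) f
        rw [hFx]
        have hev : ∀ᶠ n : ℕ in atTop, (1:ℝ) ≤ (c - x) * n := by
          have ht : Tendsto (fun n : ℕ => (c - x) * n) atTop atTop :=
            Tendsto.const_mul_atTop (by linarith) tendsto_natCast_atTop_atTop
          exact ht.eventually_ge_atTop 1
        refine Tendsto.congr' ?_ tendsto_const_nhds
        filter_upwards [hev, eventually_ge_atTop 1] with n h1 h2
        have hn0 : (0:ℝ) < n := by exact_mod_cast h2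
        rw [stepSum_eq f c b n h2 x]
        rw [if_neg]
        intro hxm
        rw [Set.mem_Ioc] at hxm
        obtain ⟨hx1, -⟩ := hxm
        rw [div_lt_iff₀ hn0] at hx1
        have hfl := Int.sub_one_lt_floor (c * n)
        have hexp : (c - x) * n = c * n - x * n := by ring
        linarith
      · exact absurd h hxc
      · rcases lt_trichotomy x b with h2 | h2 | h2
        · -- c < x < b
          have hFx : Set.indicator (Set.Ioc c b) f x = f x :=
            Set.indicator_of_mem (Set.mem_Ioc.mpr ⟨h, h2.le⟩) f
          rw [hFx]
          have hcw : ContinuousWithinAt f (Set.Icc c b) x := hx (Set.mem_Icc.mpr ⟨h.le, h2.le⟩)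
          have hyx : Tendsto (fun n : ℕ => ((⌈(n:ℝ) * x⌉ : ℝ)/n))
              (atTop : Filter ℕ) (nhdsWithin x (Set.Icc c b)) := by
            rw [tendsto_nhdsWithin_iff]
            constructor
            · apply tendsto_of_tendsto_of_tendsto_of_le_of_le'
                (tendsto_const_nhds : Tendsto (fun _ : ℕ => x) atTop (nhds x))
                ((tendsto_const_nhds.add tendsto_one_div_atTop_nhds_zero_nat).mono_right
                  (by rw [add_zero]))
              · filter_upwards [eventually_ge_atTop 1] with n hn
                have hn0 : (0:ℝ) < n := by exact_mod_cast hn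
                rw [le_div_iff₀ hn0, mul_comm]
                exact Int.le_ceil _
              · filter_upwards [eventually_ge_atTop 1] with n hn
                have hn0 : (0:ℝ) < n := by exact_mod_cast hn
                rw [div_le_iff₀ hn0, add_mul, one_div, inv_mul_cancel₀ hn0.ne']
                have := Int.ceil_lt_add_one ((n:ℝ) * x)
                have hx1 : x * (n:ℝ) = n * x := mul_comm _ _
                linarith
            · have hev : ∀ᶠ n : ℕ in atTop, (1:ℝ) ≤ (b - x) * n := by
                have ht : Tendsto (fun n : ℕ => (b - x) * n) atTop atTop :=
                  Tendsto.const_mul_atTop (by linarith) tendsto_natCast_atTop_atTop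
                exact ht.eventually_ge_atTop 1
              filter_upwards [hev, eventually_ge_atTop 1] with n h1 hn
              have hn0 : (0:ℝ) < n := by exact_mod_cast hn
              constructor
              · rw [le_div_iff₀ hn0]
                have := Int.le_ceil ((n:ℝ) * x)
                have hcn : c * n < x * n := mul_lt_mul_of_pos_right h hn0
                have hx1 : x * (n:ℝ) = n * x := mul_comm _ _
                linarith
              · rw [div_le_iff₀ hn0]
                have := Int.ceil_lt_add_one ((n:ℝ) * x)
                have hexp : (b - x) * (n:ℝ) = b * n - x * n := by ring
                have hx1 : x * (n:ℝ) = n * x := mul_comm _ _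
                linarith
          have hcomp := hcw.tendsto.comp hyx
          refine Tendsto.congr' ?_ hcomp
          have hev : ∀ᶠ n : ℕ in atTop, (1:ℝ) ≤ (b - x) * n := by
            have ht : Tendsto (fun n : ℕ => (b - x) * n) atTop atTop :=
              Tendsto.const_mul_atTop (by linarith) tendsto_natCast_atTop_atTop
            exact ht.eventually_ge_atTop 1
          filter_upwards [hev, eventually_ge_atTop 1] with n h1 hn
          have hn0 : (0:ℝ) < n := by exact_mod_cast hn
          rw [Function.comp_apply, stepSum_eq f c b n hn x, if_pos]
          constructor
          · rw [div_lt_iff₀ hn0]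
            have := Int.floor_le (c * n)
            have hcn : c * n < x * n := by
              exact mul_lt_mul_of_pos_right h hn0
            linarith
          · rw [le_div_iff₀ hn0]
            have := Int.le_ceil (b * n)
            have hexp : (b - x) * (n:ℝ) = b * n - x * n := by ring
            have h2c : ((⌈b * n⌉ : ℝ) - 1) ≥ b * n - 1 := by linarith
            linarith
        · exact absurd h2 hxb
        · -- x > b
          have hFx : Set.indicator (Set.Ioc c b) f x = 0 :=
            Set.indicator_of_notMem (fun hm => absurd hm.2 (not_le.mpr h2)) f
          rw [hFx]
          refine Tendsto.congr' ?_ tendsto_const_nhds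
          filter_upwards [eventually_ge_atTop 1] with n hn
          have hn0 : (0:ℝ) < n := by exact_mod_cast hn
          rw [stepSum_eq f c b n hn x, if_neg]
          intro hxm
          rw [Set.mem_Ioc] at hxm
          obtain ⟨-, hx2⟩ := hxm
          rw [le_div_iff₀ hn0] at hx2
          have := Int.ceil_lt_add_one (b * n)
          have hbn : b * n < x * n := mul_lt_mul_of_pos_right h2 hn0
          linarith
  have hFint : ∫ x, Set.indicator (Set.Ioc c b) f x = ∫ x in c..b, f x := by
    rw [MeasureTheory.integral_indicator measurableSet_Ioc,
      intervalIntegral.integral_of_le hcb.le]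
  rw [hFint] at key
  refine Tendsto.congr' ?_ key
  filter_upwards [eventually_ge_atTop 1] with n hn
  exact stepSum_integral f c b n hn

lemma tail_le (M : ℝ → ℝ) (a b : ℝ) (hManti : AntitoneOn M (Set.Ioc a b))
    (n : ℕ) (hn : 1 ≤ n) (p q : ℤ) (hpq : p ≤ q) (hp : a < (p : ℝ)/n)
    (hq : (q : ℝ)/n ≤ b) :
    ∑ k ∈ Finset.Ioc p q, M ((k : ℝ)/n) * (1/(n : ℝ)) ≤
      ∫ x in ((p : ℝ)/n)..((q : ℝ)/n), M x := by
  have hn0 : (0:ℝ) < n := by exact_mod_cast hn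
  have hMint : ∀ u v : ℝ, a < u → u ≤ v → v ≤ b → IntervalIntegrable M volume u v := by
    intro u v h1 h2 h3
    apply AntitoneOn.intervalIntegrable
    apply hManti.mono
    rw [Set.uIcc_of_le h2]
    intro x hx
    exact Set.mem_Ioc.mpr ⟨lt_of_lt_of_le h1 hx.1, le_trans hx.2 h3⟩
  refine Int.le_induction (motive := fun Q _ => ((Q:ℝ)/n ≤ b →
      ∑ k ∈ Finset.Ioc p Q, M ((k : ℝ)/n) * (1/(n : ℝ)) ≤
        ∫ x in ((p : ℝ)/n)..((Q : ℝ)/n), M x)) ?_ ?_ q hpq hq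
  · intro _
    simp [Finset.Ioc_self, intervalIntegral.integral_same]
  · intro q hq2 ih hqb
    push_cast at hqb
    have hstep : (q:ℝ)/n ≤ ((q:ℝ)+1)/n := by gcongr <;> linarith
    
    have hpq' : (p:ℝ)/n ≤ (q:ℝ)/n := by gcongr
    have hqa : a < (q:ℝ)/n := lt_of_lt_of_le hp hpq'
    have hq1a : a < ((q:ℝ)+1)/n := lt_of_lt_of_le hqa hstep
    have hqnb : (q:ℝ)/n ≤ b := le_trans hstep hqb
    have hint1 := hMint ((p:ℝ)/n) ((q:ℝ)/n) hp hpq' hqnb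
    have hint2 := hMint ((q:ℝ)/n) (((q:ℝ)+1)/n) hqa hstep hqb
    have hsum : Finset.Ioc p (q+1) = insert (q+1) (Finset.Ioc p q) := by
      ext k
      simp only [Finset.mem_Ioc, Finset.mem_insert]
      omega
    rw [hsum, Finset.sum_insert (by simp)]
    push_cast
    rw [← intervalIntegral.integral_add_adjacent_intervals hint1 hint2]
    have hlast : M (((q:ℝ)+1)/n) * (1/(n:ℝ)) ≤ ∫ x in ((q:ℝ)/n)..(((q:ℝ)+1)/n), M x := by
      have hconst : ∫ x in ((q:ℝ)/n)..(((q:ℝ)+1)/n), M (((q:ℝ)+1)/n) ≤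
          ∫ x in ((q:ℝ)/n)..(((q:ℝ)+1)/n), M x := by
        apply intervalIntegral.integral_mono_on hstep intervalIntegrable_const hint2
        intro x hx
        exact hManti (Set.mem_Ioc.mpr ⟨lt_of_lt_of_le hqa hx.1, le_trans hx.2 hqb⟩)
          (Set.mem_Ioc.mpr ⟨hq1a, hqb⟩) hx.2
      rw [intervalIntegral.integral_const] at hconst
      have hlen : ((q:ℝ)+1)/n - (q:ℝ)/n = 1/n := by rw [div_sub_div_same]; ring_nf
      rw [hlen, smul_eq_mul, mul_comm] at hconst
      exact hconst
    have hIH := ih hqnb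
    linarith

/-- Special case of Lemma 2: `(1/n) ∑_{an+1 < k < bn} f(k/n) → ∫_{a+}^b f`. -/
theorem riemann_sums_omitting_first_tendsto
    (a b : ℝ) (hab : a < b) (f : ℝ → ℂ) (L : ℂ)
    (hRiem : ∀ c ∈ Set.Ioo a b, RiemannIntegrableOn f c b)
    (hL : Tendsto (fun c : ℝ => ∫ x in c..b, f x) (nhdsWithin a (Set.Ioi a)) (nhds L))
    (M : ℝ → ℝ) (hManti : AntitoneOn M (Set.Ioc a b))
    (hMmaj : ∀ x ∈ Set.Ioc a b, ‖f x‖ ≤ M x)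
    (hMfin : ∃ K : ℝ,
      Tendsto (fun c : ℝ => ∫ x in c..b, M x) (nhdsWithin a (Set.Ioi a)) (nhds K)) :
    Tendsto
      (fun n : ℕ => ((1 : ℂ) / n) *
        ∑ k ∈ (Finset.Icc ⌈a * n⌉ ⌊b * n⌋).filter
            (fun k : ℤ => a * n + 1 < (k : ℝ) ∧ (k : ℝ) < b * n),
          f ((k : ℝ) / n))
      atTop (nhds L) := by
  obtain ⟨K, hK⟩ := hMfin
  have hM0 : ∀ x ∈ Set.Ioc a b, 0 ≤ M x := fun x hx => le_trans (norm_nonneg _) (hMmaj x hx)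
  have hMint : ∀ u v : ℝ, a < u → u ≤ v → v ≤ b → IntervalIntegrable M volume u v := by
    intro u v h1 h2 h3
    apply AntitoneOn.intervalIntegrable
    apply hManti.mono
    rw [Set.uIcc_of_le h2]
    intro x hx
    exact Set.mem_Ioc.mpr ⟨lt_of_lt_of_le h1 hx.1, le_trans hx.2 h3⟩
  have hIK : ∀ v, a < v → v ≤ b → (∫ x in v..b, M x) ≤ K := by
    intro v hv1 hv2
    apply ge_of_tendsto hK
    have hIoo : ∀ᶠ y in nhdsWithin a (Set.Ioi a), y ∈ Set.Ioo a v :=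
      Ioo_mem_nhdsGT_of_mem (Set.mem_Ico.mpr ⟨le_refl a, hv1⟩)
    filter_upwards [hIoo] with y hy
    rw [← intervalIntegral.integral_add_adjacent_intervals
      (hMint y v hy.1 hy.2.le hv2) (hMint v b hv1 hv2 le_rfl)]
    have hnn : 0 ≤ ∫ x in y..v, M x := by
      apply intervalIntegral.integral_nonneg hy.2.le
      intro u hu
      exact hM0 u (Set.mem_Ioc.mpr ⟨lt_of_lt_of_le hy.1 hu.1, le_trans hu.2 hv2⟩)
    linarith
  rw [Metric.tendsto_atTop]
  intro ε hε
  have hε3 : 0 < ε/3 := by linarith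
  have h1 := Metric.tendsto_nhds.mp hL _ hε3
  have h2 := Metric.tendsto_nhds.mp hK _ hε3
  have h3 : ∀ᶠ y in nhdsWithin a (Set.Ioi a), y ∈ Set.Ioo a b :=
    Ioo_mem_nhdsGT_of_mem (Set.mem_Ico.mpr ⟨le_refl a, hab⟩)
  obtain ⟨c, hc1, hc2, hc3⟩ := (h1.and (h2.and h3)).exists
  have hca : a < c := hc3.1
  have hcb : c < b := hc3.2
  obtain ⟨hfb, hfc⟩ := hRiem c hc3
  have hlemB := lemB c b hcb f hfb hfc
  obtain ⟨N2, hN2⟩ := Metric.tendsto_atTop.mp hlemB _ hε3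
  obtain ⟨N1, hN1⟩ := exists_nat_ge (1/(c - a))
  have hKM : K - (∫ x in c..b, M x) < ε/3 := by
    rw [Real.dist_eq] at hc2
    have := abs_lt.mp hc2
    linarith [this.1]
  refine ⟨max (max N1 N2) 1, fun n hn => ?_⟩
  have hn1 : 1 ≤ n := le_trans (le_max_right _ 1) hn
  have hnN1 : N1 ≤ n := le_trans (le_trans (le_max_left _ _) (le_max_left _ _)) hn
  have hnN2 : N2 ≤ n := le_trans (le_trans (le_max_right _ _) (le_max_left _ _)) hn
  have hn0 : (0:ℝ) < n := by exact_mod_cast hn1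
  have hca0 : (0:ℝ) < c - a := by linarith
  have hacn : a * n + 1 ≤ c * n := by
    have h4 : (1:ℝ)/(c-a) ≤ n := le_trans hN1 (by exact_mod_cast hnN1)
    rw [div_le_iff₀ hca0] at h4
    nlinarith
  have hcbn : c * (n:ℝ) < b * n := mul_lt_mul_of_pos_right hcb hn0
  have hsplit : (Finset.Icc ⌈a * (n:ℝ)⌉ ⌊b * (n:ℝ)⌋).filter
      (fun k : ℤ => a * n + 1 < (k : ℝ) ∧ (k : ℝ) < b * n)
      = Finset.Ioc ⌊a * (n:ℝ) + 1⌋ ⌊c * (n:ℝ)⌋ ∪ Finset.Ioo ⌊c * (n:ℝ)⌋ ⌈b * (n:ℝ)⌉ := by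
    ext k
    simp only [Finset.mem_filter, Finset.mem_Icc, Finset.mem_union, Finset.mem_Ioc,
      Finset.mem_Ioo, Int.floor_lt, Int.le_floor, Int.lt_ceil, Int.ceil_le]
    constructor
    · rintro ⟨⟨hk1, hk2⟩, hk3, hk4⟩
      by_cases hkc : (k:ℝ) ≤ c * n
      · exact Or.inl ⟨hk3, hkc⟩
      · exact Or.inr ⟨lt_of_not_ge hkc, hk4⟩
    · rintro (⟨hk1, hk2⟩ | ⟨hk1, hk2⟩)
      · exact ⟨⟨by linarith, by linarith⟩, hk1, by linarith⟩
      · exact ⟨⟨by linarith, by linarith⟩, by linarith, hk2⟩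
  have hdisj : Disjoint (Finset.Ioc ⌊a * (n:ℝ) + 1⌋ ⌊c * (n:ℝ)⌋)
      (Finset.Ioo ⌊c * (n:ℝ)⌋ ⌈b * (n:ℝ)⌉) := by
    rw [Finset.disjoint_left]
    intro k hk1 hk2
    rw [Finset.mem_Ioc] at hk1
    rw [Finset.mem_Ioo] at hk2
    omega
  have hp' : a < (⌊a * (n:ℝ) + 1⌋ : ℝ)/n := by
    rw [lt_div_iff₀ hn0]
    have := Int.sub_one_lt_floor (a * (n:ℝ) + 1)
    linarith
  have hq'c : (⌊c * (n:ℝ)⌋ : ℝ)/n ≤ c := by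
    rw [div_le_iff₀ hn0]
    exact Int.floor_le _
  have hKc := hIK c hca hcb.le
  have hTail : ‖((1:ℂ)/n) * ∑ k ∈ Finset.Ioc ⌊a * (n:ℝ) + 1⌋ ⌊c * (n:ℝ)⌋, f ((k:ℝ)/n)‖
      ≤ K - ∫ x in c..b, M x := by
    by_cases hpq : ⌊a * (n:ℝ) + 1⌋ ≤ ⌊c * (n:ℝ)⌋
    · have hpq' : (⌊a * (n:ℝ) + 1⌋ : ℝ)/n ≤ (⌊c * (n:ℝ)⌋ : ℝ)/n := by
        gcongr
      have hqa : a < (⌊c * (n:ℝ)⌋ : ℝ)/n := lt_of_lt_of_le hp' hpq'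
      have hnormle : ‖((1:ℂ)/n) * ∑ k ∈ Finset.Ioc ⌊a * (n:ℝ) + 1⌋ ⌊c * (n:ℝ)⌋, f ((k:ℝ)/n)‖
          ≤ ∑ k ∈ Finset.Ioc ⌊a * (n:ℝ) + 1⌋ ⌊c * (n:ℝ)⌋, M ((k:ℝ)/n) * (1/(n:ℝ)) := by
        rw [norm_mul]
        have h1n : ‖(1:ℂ)/(n:ℂ)‖ = 1/(n:ℝ) := by
          rw [norm_div, norm_one]
          norm_num
        rw [h1n]
        calc (1/(n:ℝ)) * ‖∑ k ∈ Finset.Ioc ⌊a * (n:ℝ) + 1⌋ ⌊c * (n:ℝ)⌋, f ((k:ℝ)/n)‖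
            ≤ (1/(n:ℝ)) * ∑ k ∈ Finset.Ioc ⌊a * (n:ℝ) + 1⌋ ⌊c * (n:ℝ)⌋, ‖f ((k:ℝ)/n)‖ := by
              apply mul_le_mul_of_nonneg_left (norm_sum_le _ _) (by positivity)
          _ = ∑ k ∈ Finset.Ioc ⌊a * (n:ℝ) + 1⌋ ⌊c * (n:ℝ)⌋, ‖f ((k:ℝ)/n)‖ * (1/(n:ℝ)) := by
              rw [Finset.mul_sum]
              exact Finset.sum_congr rfl fun _ _ => mul_comm _ _
          _ ≤ ∑ k ∈ Finset.Ioc ⌊a * (n:ℝ) + 1⌋ ⌊c * (n:ℝ)⌋, M ((k:ℝ)/n) * (1/(n:ℝ)) := by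
              apply Finset.sum_le_sum
              intro k hk
              rw [Finset.mem_Ioc] at hk
              have hk1 : a * n + 1 < (k:ℝ) := Int.floor_lt.mp hk.1
              have hk2 : (k:ℝ) ≤ c * n := Int.le_floor.mp hk.2
              have hkmem : (k:ℝ)/n ∈ Set.Ioc a b := by
                constructor
                · rw [lt_div_iff₀ hn0]; linarith
                · rw [div_le_iff₀ hn0]; linarith
              exact mul_le_mul_of_nonneg_right (hMmaj _ hkmem) (by positivity)
      have hB := tail_le M a b hManti n hn1 _ _ hpq hp' (le_trans hq'c hcb.le)
      have hCC : (∫ x in ((⌊a * (n:ℝ) + 1⌋:ℝ)/n)..((⌊c * (n:ℝ)⌋:ℝ)/n), M x)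
          ≤ ∫ x in ((⌊a * (n:ℝ) + 1⌋:ℝ)/n)..c, M x := by
        rw [← intervalIntegral.integral_add_adjacent_intervals
          (hMint _ _ hp' hpq' (le_trans hq'c hcb.le)) (hMint _ _ hqa hq'c hcb.le)]
        have h0 : 0 ≤ ∫ x in ((⌊c * (n:ℝ)⌋:ℝ)/n)..c, M x := by
          apply intervalIntegral.integral_nonneg hq'c
          intro u hu
          exact hM0 u (Set.mem_Ioc.mpr ⟨lt_of_lt_of_le hqa hu.1, le_trans hu.2 hcb.le⟩)
        linarith
      have hDD : (∫ x in ((⌊a * (n:ℝ) + 1⌋:ℝ)/n)..c, M x) ≤ K - ∫ x in c..b, M x := by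
        have hadd := intervalIntegral.integral_add_adjacent_intervals
          (hMint _ c hp' (le_trans hpq' hq'c) hcb.le) (hMint c b hca hcb.le le_rfl)
        have hpb := hIK ((⌊a * (n:ℝ) + 1⌋:ℝ)/n) hp' (le_trans (le_trans hpq' hq'c) hcb.le)
        linarith
      linarith
    · rw [Finset.Ioc_eq_empty (by omega), Finset.sum_empty, mul_zero, norm_zero]
      linarith
  have hS2eq : ((1:ℂ)/n) * ∑ k ∈ Finset.Ioo ⌊c * (n:ℝ)⌋ ⌈b * (n:ℝ)⌉, f ((k:ℝ)/n)
      = ∑ k ∈ Finset.Ioo ⌊c * (n:ℝ)⌋ ⌈b * (n:ℝ)⌉, f ((k:ℝ)/n) * (1/(n:ℂ)) := by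
    rw [Finset.mul_sum]
    exact Finset.sum_congr rfl fun _ _ => mul_comm _ _
  have hd2 := hN2 n hnN2
  rw [dist_eq_norm] at hd2
  have hd1 := hc1
  rw [dist_eq_norm] at hd1
  rw [dist_eq_norm, hsplit, Finset.sum_union hdisj, mul_add, hS2eq]
  have key : ∀ T S2 I : ℂ, ‖T + S2 - L‖ ≤ ‖T‖ + ‖S2 - I‖ + ‖I - L‖ := by
    intro T S2 I
    calc ‖T + S2 - L‖ = ‖T + ((S2 - I) + (I - L))‖ := by congr 1; ring
      _ ≤ ‖T‖ + ‖(S2 - I) + (I - L)‖ := norm_add_le _ _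
      _ ≤ ‖T‖ + (‖S2 - I‖ + ‖I - L‖) := by gcongr; exact norm_add_le _ _
      _ = ‖T‖ + ‖S2 - I‖ + ‖I - L‖ := by ring
  refine lt_of_le_of_lt (key _ _ (∫ x in c..b, f x)) ?_
  linarith
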